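/- Let G=(X,w,κ,μ) be a finite graph and 1≤p<∞, and let 𝒜=F+Δ with Fu(x)=−f(u(x)). (i) If f satisfies (F1), then 𝒜 is accretive on ℓ^p(X,μ): ‖(u−v)+λ(𝒜u−𝒜v)‖_p ≥ ‖u−v‖_p for all u,v:X→ℝ and all λ>0. (ii) If f satisfies (F2) with constant L>0, then 𝒜 is L-accretive on ℓ^p(X,μ), i.e. 𝒜+L·id is accretive. -/

import Mathlib

open Filter Topology MeasureTheory

/-- A weighted graph `G = (X, w, κ, μ)`. -/
structure WGraph (X : Type*) where
  w : X → X → ℝ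
  kap : X → ℝ
  mu : X → ℝ
  w_nonneg : ∀ x y, 0 ≤ w x y
  w_symm : ∀ x y, w x y = w y x
  w_loopless : ∀ x, w x x = 0
  w_summable : ∀ x, Summable (fun y => w x y)
  kap_nonneg : ∀ x, 0 ≤ kap x
  mu_pos : ∀ x, 0 < mu x

namespace WGraph

variable {X : Type*}

/-- Adjacency: `x ∼ y` iff `w x y > 0`. -/
def Adj (G : WGraph X) (x y : X) : Prop := 0 < G.w x y

/-- `G` is connected: any two nodes are joined by a finite walk. -/
def Connected (G : WGraph X) : Prop := ∀ x y : X, Relation.ReflTransGen G.Adj x y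

/-- An infinite path: injective sequence of consecutively adjacent nodes. -/
def InfinitePath (G : WGraph X) (γ : ℕ → X) : Prop :=
  Function.Injective γ ∧ ∀ n, G.Adj (γ n) (γ (n + 1))

/-- Condition (IP): every infinite path has infinite total measure. -/
def CondIP (G : WGraph X) : Prop :=
  ∀ γ : ℕ → X, G.InfinitePath γ → ¬ Summable (fun n => G.mu (γ n))

/-- Condition (B): bounded edge degree. -/
def CondB (G : WGraph X) : Prop :=
  ∃ C : ℝ, ∀ x, (∑' y, G.w x y) / G.mu x ≤ C

/-- Condition (C_p). -/
def CondCp (G : WGraph X) (p : ℝ) : Prop :=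
  ∀ x, Summable (fun y => G.w x y ^ p / G.mu y ^ (p - 1))

/-- Membership in `ℓ^p(X,μ)` for `1 ≤ p < ∞`. -/
def memLp (G : WGraph X) (p : ℝ) (u : X → ℝ) : Prop :=
  Summable (fun x => |u x| ^ p * G.mu x)

/-- The `ℓ^p(X,μ)`-norm. -/
noncomputable def lpNorm (G : WGraph X) (p : ℝ) (u : X → ℝ) : ℝ :=
  (∑' x, |u x| ^ p * G.mu x) ^ (1 / p)

/-- Membership in the formal domain of the graph Laplacian. -/
def inDomLap (G : WGraph X) (u : X → ℝ) : Prop :=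
  ∀ x, Summable (fun y => G.w x y * |u y|)

/-- The formal graph Laplacian. -/
noncomputable def lap (G : WGraph X) (u : X → ℝ) (x : X) : ℝ :=
  (1 / G.mu x) * ∑' y, G.w x y * (u x - u y) + (G.kap x / G.mu x) * u x

/-- The nonlinear operator `𝒜 u = -f ∘ u + Δ u`. -/
noncomputable def Aop (G : WGraph X) (f : ℝ → ℝ) (u : X → ℝ) (x : X) : ℝ :=
  -f (u x) + G.lap u x

/-- `dom_p(𝒜)`. -/
def inDomA (G : WGraph X) (f : ℝ → ℝ) (p : ℝ) (u : X → ℝ) : Prop :=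
  G.memLp p u ∧ G.inDomLap u ∧ G.memLp p (G.Aop f u)

end WGraph

/-- Condition (F1): `f` continuous, monotone decreasing, `f 0 = 0`. -/
def CondF1 (f : ℝ → ℝ) : Prop := Continuous f ∧ Antitone f ∧ f 0 = 0

/-- Condition (F2): `f` uniformly Lipschitz with constant `L > 0`, `f 0 = 0`. -/
def CondF2 (f : ℝ → ℝ) (L : ℝ) : Prop :=
  0 < L ∧ (∀ s t : ℝ, |f t - f s| ≤ L * |t - s|) ∧ f 0 = 0

section Aux

variable {X : Type*} [Fintype X]

/-- The duality map `φ(t) = sign t · |t|^(p-1)`. -/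
noncomputable def phiAux (p t : ℝ) : ℝ := Real.sign t * |t| ^ (p - 1)

lemma phiAux_nonneg {p t : ℝ} (ht : 0 ≤ t) : 0 ≤ phiAux p t := by
  rcases eq_or_lt_of_le ht with h | h
  · simp [phiAux, ← h]
  · exact mul_nonneg (by rw [Real.sign_of_pos h]; norm_num)
      (Real.rpow_nonneg (abs_nonneg t) _)

lemma phiAux_nonpos {p t : ℝ} (ht : t ≤ 0) : phiAux p t ≤ 0 := by
  rcases eq_or_lt_of_le ht with h | h
  · simp [phiAux, h]
  · rw [phiAux, Real.sign_of_neg h]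
    have := Real.rpow_nonneg (abs_nonneg t) (p - 1)
    nlinarith

lemma abs_sign_le_one (t : ℝ) : |Real.sign t| ≤ 1 := by
  rcases Real.sign_apply_eq t with h | h | h <;> simp [h]

lemma mul_sign_self (t : ℝ) : t * Real.sign t = |t| := by
  rcases lt_trichotomy t 0 with h | h | h
  · rw [Real.sign_of_neg h, abs_of_neg h]; ring
  · simp [h]
  · rw [Real.sign_of_pos h, abs_of_pos h]; ring

lemma mul_phiAux_self {p : ℝ} (hp : 1 ≤ p) (t : ℝ) : t * phiAux p t = |t| ^ p := by
  rcases eq_or_ne t 0 with h | h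
  · rw [h, phiAux, Real.sign_zero, abs_zero,
      Real.zero_rpow (by positivity : p ≠ 0)]
    ring
  · have habs : (0:ℝ) < |t| := abs_pos.mpr h
    calc t * phiAux p t = (t * Real.sign t) * |t| ^ (p - 1) := by rw [phiAux]; ring
      _ = |t| ^ (1:ℝ) * |t| ^ (p - 1) := by rw [mul_sign_self, Real.rpow_one]
      _ = |t| ^ (1 + (p - 1)) := (Real.rpow_add habs _ _).symm
      _ = |t| ^ p := by ring_nf

lemma abs_phiAux_le (p t : ℝ) : |phiAux p t| ≤ |t| ^ (p - 1) := by
  rw [phiAux, abs_mul, abs_of_nonneg (Real.rpow_nonneg (abs_nonneg t) _)]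
  calc |Real.sign t| * |t| ^ (p - 1) ≤ 1 * |t| ^ (p - 1) :=
        mul_le_mul_of_nonneg_right (abs_sign_le_one t)
          (Real.rpow_nonneg (abs_nonneg t) _)
    _ = |t| ^ (p - 1) := one_mul _

lemma phiAux_mono {p : ℝ} (hp : 1 ≤ p) : Monotone (phiAux p) := by
  intro a b hab
  rcases le_or_gt a 0 with ha | ha
  · rcases le_or_gt b 0 with hb | hb
    · rcases eq_or_lt_of_le hb with hb' | hb'
      · exact le_trans (phiAux_nonpos ha) (phiAux_nonneg hb'.ge)
      · have ha' : a < 0 := lt_of_le_of_lt hab hb'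
        rw [phiAux, phiAux, Real.sign_of_neg ha', Real.sign_of_neg hb',
          abs_of_neg ha', abs_of_neg hb']
        have : (-b) ^ (p - 1) ≤ (-a) ^ (p - 1) :=
          Real.rpow_le_rpow (by linarith) (by linarith) (by linarith)
        linarith
    · exact le_trans (phiAux_nonpos ha) (phiAux_nonneg hb.le)
  · have hb : 0 < b := lt_of_lt_of_le ha hab
    rw [phiAux, phiAux, Real.sign_of_pos ha, Real.sign_of_pos hb,
      abs_of_pos ha, abs_of_pos hb]
    simpa using Real.rpow_le_rpow ha.le hab (by linarith)

/-- Hölder inequality step. -/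
lemma holder_step (G : WGraph X) {p : ℝ} (hp : 1 ≤ p) (a b : X → ℝ) :
    ∑ x, |a x| * |b x| ^ (p - 1) * G.mu x ≤
      (∑ x, |a x| ^ p * G.mu x) ^ (1/p) * (∑ x, |b x| ^ p * G.mu x) ^ ((p - 1)/p) := by
  rcases eq_or_lt_of_le hp with hp1 | hp1
  · subst hp1
    simp [Real.rpow_one]
  · have hpne : p ≠ 0 := by positivity
    have hp1ne : p - 1 ≠ 0 := by linarith [hp1]
    set q : ℝ := p / (p - 1) with hq
    have hpq : Real.HolderConjugate p q := (Real.holderConjugate_iff_eq_conjExponent hp1).2 hq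
    have hone : 1/p + 1/q = 1 := by
      simpa [one_div] using (Real.holderConjugate_iff.mp hpq).2
    have H := Real.inner_le_Lp_mul_Lq_of_nonneg (s := Finset.univ)
      (f := fun x => |a x| * G.mu x ^ (1/p))
      (g := fun x => |b x| ^ (p - 1) * G.mu x ^ (1/q)) hpq
      (fun i _ => mul_nonneg (abs_nonneg _) (Real.rpow_nonneg (G.mu_pos i).le _))
      (fun i _ => mul_nonneg (Real.rpow_nonneg (abs_nonneg _) _)
        (Real.rpow_nonneg (G.mu_pos i).le _))
    have e1 : ∀ x : X, (|a x| * G.mu x ^ (1/p)) * (|b x| ^ (p - 1) * G.mu x ^ (1/q))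
        = |a x| * |b x| ^ (p - 1) * G.mu x := by
      intro x
      calc (|a x| * G.mu x ^ (1/p)) * (|b x| ^ (p - 1) * G.mu x ^ (1/q))
          = |a x| * |b x| ^ (p - 1) * (G.mu x ^ (1/p) * G.mu x ^ (1/q)) := by ring
        _ = |a x| * |b x| ^ (p - 1) * G.mu x := by
            rw [← Real.rpow_add (G.mu_pos x), hone, Real.rpow_one]
    have e2 : ∀ x : X, (|a x| * G.mu x ^ (1/p)) ^ p = |a x| ^ p * G.mu x := by
      intro x
      rw [Real.mul_rpow (abs_nonneg _) (Real.rpow_nonneg (G.mu_pos x).le _),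
        ← Real.rpow_mul (G.mu_pos x).le, one_div_mul_cancel hpne, Real.rpow_one]
    have e3 : ∀ x : X, (|b x| ^ (p - 1) * G.mu x ^ (1/q)) ^ q = |b x| ^ p * G.mu x := by
      intro x
      rw [Real.mul_rpow (Real.rpow_nonneg (abs_nonneg _) _)
          (Real.rpow_nonneg (G.mu_pos x).le _),
        ← Real.rpow_mul (abs_nonneg _), ← Real.rpow_mul (G.mu_pos x).le]
      have h1 : (p - 1) * q = p := by rw [hq]; field_simp
      have h2 : 1/q * q = 1 := by
        rw [hq]; field_simp
      rw [h1, h2, Real.rpow_one]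
    have e4 : 1/q = (p - 1)/p := by rw [hq, one_div_div]
    calc ∑ x, |a x| * |b x| ^ (p - 1) * G.mu x
        = ∑ x, (|a x| * G.mu x ^ (1/p)) * (|b x| ^ (p - 1) * G.mu x ^ (1/q)) :=
          (Finset.sum_congr rfl fun x _ => e1 x).symm
      _ ≤ (∑ x, (|a x| * G.mu x ^ (1/p)) ^ p) ^ (1/p) *
            (∑ x, (|b x| ^ (p - 1) * G.mu x ^ (1/q)) ^ q) ^ (1/q) := H
      _ = (∑ x, |a x| ^ p * G.mu x) ^ (1/p) * (∑ x, |b x| ^ p * G.mu x) ^ ((p - 1)/p) := by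
          rw [Finset.sum_congr rfl fun x _ => e2 x, Finset.sum_congr rfl fun x _ => e3 x, e4]

/-- The key accretivity lemma: nonnegative pairing implies the norm inequality. -/
lemma keyAux (G : WGraph X) {p : ℝ} (hp : 1 ≤ p) (g h : X → ℝ)
    (hpair : 0 ≤ ∑ x, h x * phiAux p (g x) * G.mu x) :
    G.lpNorm p g ≤ G.lpNorm p (fun x => g x + h x) := by
  have hp0 : (0:ℝ) < p := lt_of_lt_of_le one_pos hp
  have hnormg : G.lpNorm p g = (∑ x, |g x| ^ p * G.mu x) ^ (1/p) := by
    rw [WGraph.lpNorm, tsum_fintype]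
  have hnormgh : G.lpNorm p (fun x => g x + h x)
      = (∑ x, |g x + h x| ^ p * G.mu x) ^ (1/p) := by
    rw [WGraph.lpNorm, tsum_fintype]
  have hS1nonneg : 0 ≤ ∑ x, |g x| ^ p * G.mu x :=
    Finset.sum_nonneg fun x _ =>
      mul_nonneg (Real.rpow_nonneg (abs_nonneg _) _) (G.mu_pos x).le
  have hS2nonneg : 0 ≤ ∑ x, |g x + h x| ^ p * G.mu x :=
    Finset.sum_nonneg fun x _ =>
      mul_nonneg (Real.rpow_nonneg (abs_nonneg _) _) (G.mu_pos x).le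
  have step1 : ∑ x, |g x| ^ p * G.mu x
      ≤ ∑ x, |g x + h x| * |g x| ^ (p - 1) * G.mu x := by
    have e1 : ∑ x, |g x| ^ p * G.mu x = ∑ x, g x * phiAux p (g x) * G.mu x :=
      Finset.sum_congr rfl fun x _ => by rw [mul_phiAux_self hp]
    have e2 : ∑ x, (g x + h x) * phiAux p (g x) * G.mu x
        = (∑ x, g x * phiAux p (g x) * G.mu x) + ∑ x, h x * phiAux p (g x) * G.mu x := by
      rw [← Finset.sum_add_distrib]
      exact Finset.sum_congr rfl fun x _ => by ring
    have e3 : ∑ x, (g x + h x) * phiAux p (g x) * G.mu x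
        ≤ ∑ x, |g x + h x| * |g x| ^ (p - 1) * G.mu x := by
      apply Finset.sum_le_sum
      intro x _
      apply mul_le_mul_of_nonneg_right _ (G.mu_pos x).le
      calc (g x + h x) * phiAux p (g x) ≤ |(g x + h x) * phiAux p (g x)| := le_abs_self _
        _ = |g x + h x| * |phiAux p (g x)| := abs_mul _ _
        _ ≤ |g x + h x| * |g x| ^ (p - 1) :=
            mul_le_mul_of_nonneg_left (abs_phiAux_le _ _) (abs_nonneg _)
    rw [e1]
    linarith [e3, e2.ge]
  have step2 := holder_step G hp (fun x => g x + h x) g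
  rw [hnormg, hnormgh]
  rcases eq_or_lt_of_le hS1nonneg with h0 | h0
  · rw [← h0, Real.zero_rpow (by positivity : 1/p ≠ 0)]
    exact Real.rpow_nonneg hS2nonneg _
  · have hfac : 0 < (∑ x, |g x| ^ p * G.mu x) ^ ((p - 1)/p) := Real.rpow_pos_of_pos h0 _
    have hkey : (∑ x, |g x| ^ p * G.mu x) ^ (1/p) * (∑ x, |g x| ^ p * G.mu x) ^ ((p - 1)/p)
        ≤ (∑ x, |g x + h x| ^ p * G.mu x) ^ (1/p) *
            (∑ x, |g x| ^ p * G.mu x) ^ ((p - 1)/p) := by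
      rw [← Real.rpow_add h0]
      have he : 1/p + (p - 1)/p = 1 := by field_simp; ring
      rw [he, Real.rpow_one]
      exact le_trans step1 step2
    exact le_of_mul_le_mul_right hkey hfac

lemma lap_sub (G : WGraph X) (u v : X → ℝ) (x : X) :
    G.lap u x - G.lap v x = G.lap (fun z => u z - v z) x := by
  rw [WGraph.lap, WGraph.lap, WGraph.lap, tsum_fintype, tsum_fintype, tsum_fintype]
  have e : ∑ y, G.w x y * ((u x - v x) - (u y - v y))
      = (∑ y, G.w x y * (u x - u y)) - ∑ y, G.w x y * (v x - v y) := by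
    rw [← Finset.sum_sub_distrib]
    exact Finset.sum_congr rfl fun y _ => by ring
  rw [e]
  ring

lemma lap_pair (G : WGraph X) {p : ℝ} (hp : 1 ≤ p) (g : X → ℝ) :
    0 ≤ ∑ x, G.lap g x * phiAux p (g x) * G.mu x := by
  have expand : ∀ x, G.lap g x * phiAux p (g x) * G.mu x
      = (∑ y, G.w x y * (g x - g y)) * phiAux p (g x)
        + G.kap x * (g x * phiAux p (g x)) := by
    intro x
    rw [WGraph.lap, tsum_fintype]
    have hmu : G.mu x ≠ 0 := (G.mu_pos x).ne'
    field_simp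
  rw [Finset.sum_congr rfl fun x _ => expand x, Finset.sum_add_distrib]
  have h2 : 0 ≤ ∑ x, G.kap x * (g x * phiAux p (g x)) :=
    Finset.sum_nonneg fun x _ => mul_nonneg (G.kap_nonneg x)
      (by rw [mul_phiAux_self hp]; positivity)
  have h1 : 0 ≤ ∑ x, (∑ y, G.w x y * (g x - g y)) * phiAux p (g x) := by
    have hSeq : ∑ x, (∑ y, G.w x y * (g x - g y)) * phiAux p (g x)
        = ∑ x, ∑ y, G.w x y * (g x - g y) * phiAux p (g x) :=
      Finset.sum_congr rfl fun x _ => Finset.sum_mul _ _ _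
    have hswap : ∑ x, ∑ y, G.w x y * (g x - g y) * phiAux p (g x)
        = ∑ x, ∑ y, -(G.w x y * (g x - g y) * phiAux p (g y)) := by
      rw [Finset.sum_comm]
      refine Finset.sum_congr rfl fun x _ => Finset.sum_congr rfl fun y _ => ?_
      rw [G.w_symm y x]
      ring
    have hterm : ∀ x y, 0 ≤ G.w x y * (g x - g y) * (phiAux p (g x) - phiAux p (g y)) := by
      intro x y
      have hw := G.w_nonneg x y
      have hmono : 0 ≤ (g x - g y) * (phiAux p (g x) - phiAux p (g y)) := by
        rcases le_total (g x) (g y) with hxy | hxy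
        · have hphi := phiAux_mono hp hxy
          nlinarith
        · have hphi := phiAux_mono hp hxy
          nlinarith
      calc (0:ℝ) = G.w x y * 0 := by ring
        _ ≤ G.w x y * ((g x - g y) * (phiAux p (g x) - phiAux p (g y))) :=
            mul_le_mul_of_nonneg_left hmono hw
        _ = G.w x y * (g x - g y) * (phiAux p (g x) - phiAux p (g y)) := by ring
    have h2S : 0 ≤ 2 * ∑ x, ∑ y, G.w x y * (g x - g y) * phiAux p (g x) := by
      have : 2 * ∑ x, ∑ y, G.w x y * (g x - g y) * phiAux p (g x)
          = ∑ x, ∑ y, G.w x y * (g x - g y) * (phiAux p (g x) - phiAux p (g y)) := by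
        calc 2 * ∑ x, ∑ y, G.w x y * (g x - g y) * phiAux p (g x)
            = (∑ x, ∑ y, G.w x y * (g x - g y) * phiAux p (g x))
              + ∑ x, ∑ y, -(G.w x y * (g x - g y) * phiAux p (g y)) := by
              rw [← hswap]; ring
          _ = ∑ x, ∑ y, G.w x y * (g x - g y) * (phiAux p (g x) - phiAux p (g y)) := by
              rw [← Finset.sum_add_distrib]
              refine Finset.sum_congr rfl fun x _ => ?_
              rw [← Finset.sum_add_distrib]
              exact Finset.sum_congr rfl fun y _ => by ring
      rw [this]
      exact Finset.sum_nonneg fun x _ => Finset.sum_nonneg fun y _ => hterm x y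
    rw [hSeq]
    linarith
  linarith

end Aux

/-- on a finite graph, `𝒜 = F + Δ` is accretive on `ℓ^p(X,μ)` under
(F1), and `L`-accretive (i.e. `𝒜 + L·id` is accretive) under (F2). -/
theorem stmt5 {X : Type*} [Finite X] (G : WGraph X) (f : ℝ → ℝ) (p : ℝ) (hp : 1 ≤ p) :
    (CondF1 f → ∀ (u v : X → ℝ) (lam : ℝ), 0 < lam →
      G.lpNorm p (fun x => u x - v x) ≤
        G.lpNorm p (fun x => (u x - v x) + lam * (G.Aop f u x - G.Aop f v x))) ∧
    (∀ L : ℝ, CondF2 f L → ∀ (u v : X → ℝ) (lam : ℝ), 0 < lam →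
      G.lpNorm p (fun x => u x - v x) ≤
        G.lpNorm p (fun x =>
          (u x - v x) + lam * ((G.Aop f u x + L * u x) - (G.Aop f v x + L * v x)))) := by
  have : Fintype X := Fintype.ofFinite X
  constructor
  · rintro ⟨-, hf, -⟩ u v lam hlam
    have hAdiff : ∀ x, G.Aop f u x - G.Aop f v x
        = -(f (u x) - f (v x)) + G.lap (fun z => u z - v z) x := by
      intro x
      rw [WGraph.Aop, WGraph.Aop, ← lap_sub]
      ring
    have hpair : 0 ≤ ∑ x, (lam * (G.Aop f u x - G.Aop f v x))
        * phiAux p (u x - v x) * G.mu x := by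
      have e : ∀ x, (lam * (G.Aop f u x - G.Aop f v x)) * phiAux p (u x - v x) * G.mu x
          = lam * ((-(f (u x) - f (v x))) * phiAux p (u x - v x) * G.mu x)
            + lam * (G.lap (fun z => u z - v z) x * phiAux p (u x - v x) * G.mu x) := by
        intro x; rw [hAdiff x]; ring
      rw [Finset.sum_congr rfl fun x _ => e x, Finset.sum_add_distrib,
        ← Finset.mul_sum, ← Finset.mul_sum]
      have h1 : 0 ≤ ∑ x, (-(f (u x) - f (v x))) * phiAux p (u x - v x) * G.mu x := by
        apply Finset.sum_nonneg
        intro x _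
        apply mul_nonneg _ (G.mu_pos x).le
        rcases le_total (u x) (v x) with h | h
        · have hphi : phiAux p (u x - v x) ≤ 0 := phiAux_nonpos (by linarith)
          have hfle : f (v x) ≤ f (u x) := hf h
          nlinarith [mul_nonneg (by linarith : (0:ℝ) ≤ f (u x) - f (v x)) (neg_nonneg.mpr hphi)]
        · have hphi : 0 ≤ phiAux p (u x - v x) := phiAux_nonneg (by linarith)
          have hfle : f (u x) ≤ f (v x) := hf h
          nlinarith [mul_nonneg (by linarith : (0:ℝ) ≤ f (v x) - f (u x)) hphi]
      have h2 := lap_pair G hp (fun z => u z - v z)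
      exact add_nonneg (mul_nonneg hlam.le h1) (mul_nonneg hlam.le h2)
    simpa using keyAux G hp (fun x => u x - v x)
      (fun x => lam * (G.Aop f u x - G.Aop f v x)) hpair
  · rintro L ⟨-, hf, -⟩ u v lam hlam
    have hAdiff : ∀ x, (G.Aop f u x + L * u x) - (G.Aop f v x + L * v x)
        = (L * (u x - v x) - (f (u x) - f (v x))) + G.lap (fun z => u z - v z) x := by
      intro x
      rw [WGraph.Aop, WGraph.Aop, ← lap_sub]
      ring
    have hpair : 0 ≤ ∑ x, (lam * ((G.Aop f u x + L * u x) - (G.Aop f v x + L * v x)))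
        * phiAux p (u x - v x) * G.mu x := by
      have e : ∀ x, (lam * ((G.Aop f u x + L * u x) - (G.Aop f v x + L * v x)))
          * phiAux p (u x - v x) * G.mu x
          = lam * ((L * (u x - v x) - (f (u x) - f (v x)))
              * phiAux p (u x - v x) * G.mu x)
            + lam * (G.lap (fun z => u z - v z) x * phiAux p (u x - v x) * G.mu x) := by
        intro x; rw [hAdiff x]; ring
      rw [Finset.sum_congr rfl fun x _ => e x, Finset.sum_add_distrib,
        ← Finset.mul_sum, ← Finset.mul_sum]
      have h1 : 0 ≤ ∑ x, (L * (u x - v x) - (f (u x) - f (v x)))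
          * phiAux p (u x - v x) * G.mu x := by
        apply Finset.sum_nonneg
        intro x _
        apply mul_nonneg _ (G.mu_pos x).le
        set t := u x - v x with ht
        set d := f (u x) - f (v x) with hd
        have habs : |d| ≤ L * |t| := by
          have := hf (v x) (u x)
          simpa [hd, ht] using this
        have hsd : d * Real.sign t ≤ |d| := by
          calc d * Real.sign t ≤ |d * Real.sign t| := le_abs_self _
            _ = |d| * |Real.sign t| := abs_mul _ _
            _ ≤ |d| * 1 := mul_le_mul_of_nonneg_left (abs_sign_le_one t) (abs_nonneg d)
            _ = |d| := mul_one _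
        have hts : t * Real.sign t = |t| := mul_sign_self t
        have hfirst : 0 ≤ (L * t - d) * Real.sign t := by
          have he : (L * t - d) * Real.sign t = L * (t * Real.sign t) - d * Real.sign t := by
            ring
          rw [he, hts]
          linarith [le_abs_self d, neg_abs_le d]
        have : (L * t - d) * phiAux p t
            = ((L * t - d) * Real.sign t) * |t| ^ (p - 1) := by
          rw [phiAux]; ring
        rw [this]
        exact mul_nonneg hfirst (Real.rpow_nonneg (abs_nonneg t) _)
      have h2 := lap_pair G hp (fun z => u z - v z)
      exact add_nonneg (mul_nonneg hlam.le h1) (mul_nonneg hlam.le h2)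
    simpa using keyAux G hp (fun x => u x - v x)
      (fun x => lam * ((G.Aop f u x + L * u x) - (G.Aop f v x + L * v x))) hpair
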